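/- Let ν ∈ ℝ with ν ≠ 0. Then Im( Γ′(1 + iν)/Γ(1 + iν) + i/(2ν) ) = (π/2)·coth(πν), where Γ′ denotes the complex derivative of the complex Gamma function Γ. -/

import Mathlib

open Complex Real

lemma gamma_hasDerivAt_conj {f' s : ℂ} (h : HasDerivAt Complex.Gamma f' s) :
    HasDerivAt Complex.Gamma ((starRingEnd ℂ) f') ((starRingEnd ℂ) s) := by
  rw [hasDerivAt_iff_isLittleO] at h ⊢
  have hc : Filter.Tendsto (starRingEnd ℂ) (nhds ((starRingEnd ℂ) s)) (nhds s) := by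
    have := (Complex.continuous_conj.tendsto ((starRingEnd ℂ) s))
    simpa using this
  have h2 := h.comp_tendsto hc
  rw [Asymptotics.isLittleO_iff] at h2 ⊢
  intro c hc'
  filter_upwards [h2 hc'] with w hw
  have e1 : Complex.Gamma w - Complex.Gamma ((starRingEnd ℂ) s) -
      (w - (starRingEnd ℂ) s) • ((starRingEnd ℂ) f')
      = (starRingEnd ℂ) (Complex.Gamma ((starRingEnd ℂ) w) - Complex.Gamma s -
        (((starRingEnd ℂ) w) - s) • f') := by
    simp [map_sub, map_mul, Complex.Gamma_conj, smul_eq_mul]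
  have e2 : w - (starRingEnd ℂ) s = (starRingEnd ℂ) ((starRingEnd ℂ) w - s) := by
    simp [map_sub]
  rw [e1, e2, RCLike.norm_conj, RCLike.norm_conj]
  exact hw

theorem digamma_imaginary_part (ν : ℝ) (hν : ν ≠ 0) :
    (deriv Complex.Gamma (1 + I * (ν : ℂ)) / Complex.Gamma (1 + I * (ν : ℂ)) +
        I / (2 * (ν : ℂ))).im =
      π / 2 * (Real.cosh (π * ν) / Real.sinh (π * ν)) := by
  have hν' : (ν : ℂ) ≠ 0 := Complex.ofReal_ne_zero.mpr hν
  set a : ℂ := I * (ν : ℂ) with ha_def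
  have ha : a ≠ 0 := mul_ne_zero I_ne_zero hν'
  have ha' : -a ≠ 0 := neg_ne_zero.mpr ha
  -- differentiability points
  have h1 : ∀ m : ℕ, (1 + a) ≠ -m := by
    intro m h
    have := congrArg Complex.im h
    simp [ha_def] at this
    exact hν this
  have h2 : ∀ m : ℕ, (-a) ≠ -m := by
    intro m h
    have := congrArg Complex.im h
    simp [ha_def] at this
    exact hν this
  have d1 : HasDerivAt Complex.Gamma (deriv Complex.Gamma (1 + a)) (1 + a) :=
    (Complex.differentiableAt_Gamma _ h1).hasDerivAt
  have d2 : HasDerivAt Complex.Gamma (deriv Complex.Gamma (-a)) (-a) :=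
    (Complex.differentiableAt_Gamma _ h2).hasDerivAt
  set g1 := deriv Complex.Gamma (1 + a) with hg1
  set g2 := deriv Complex.Gamma (-a) with hg2
  set P := Complex.Gamma (1 + a) with hP
  set Q := Complex.Gamma (-a) with hQ
  have hPne : P ≠ 0 := Complex.Gamma_ne_zero h1
  have hQne : Q ≠ 0 := Complex.Gamma_ne_zero h2
  -- sin and cos values at π(1+a)
  set sh := Real.sinh (π * ν) with hsh
  set ch := Real.cosh (π * ν) with hch
  have hshne : sh ≠ 0 := by
    rw [hsh, Real.sinh_ne_zero]
    exact mul_ne_zero Real.pi_ne_zero hν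
  have hsin : Complex.sin ((π : ℂ) * (1 + a)) = -((sh : ℂ) * I) := by
    have : (π : ℂ) * (1 + a) = (π : ℂ) + ((π * ν : ℝ) : ℂ) * I := by
      push_cast [ha_def]; ring
    rw [this, Complex.sin_add, Complex.sin_pi, Complex.cos_pi, Complex.sin_mul_I,
      ← Complex.ofReal_sinh]
    ring
  have hcos : Complex.cos ((π : ℂ) * (1 + a)) = -(ch : ℂ) := by
    have : (π : ℂ) * (1 + a) = (π : ℂ) + ((π * ν : ℝ) : ℂ) * I := by
      push_cast [ha_def]; ring
    rw [this, Complex.cos_add, Complex.sin_pi, Complex.cos_pi, Complex.cos_mul_I,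
      ← Complex.ofReal_cosh]
    ring
  have hsinne : Complex.sin ((π : ℂ) * (1 + a)) ≠ 0 := by
    rw [hsin]
    simp [hshne]
  -- reflection formula derivative
  have dinner : HasDerivAt (fun z : ℂ => Complex.Gamma (1 - z)) (-g2) (1 + a) := by
    have hlin : HasDerivAt (fun z : ℂ => 1 - z) (-1) (1 + a) :=
      (hasDerivAt_id _).const_sub 1
    have : (1 : ℂ) - (1 + a) = -a := by ring
    have := HasDerivAt.comp (1 + a) (this ▸ d2) hlin
    simpa [Function.comp_def] using this
  have hF : HasDerivAt (fun z : ℂ => Complex.Gamma z * Complex.Gamma (1 - z))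
      (g1 * Q + P * (-g2)) (1 + a) := by
    have := d1.mul dinner
    simpa [hQ, hP, Pi.mul_def, show (1 : ℂ) - (1 + a) = -a by ring] using this
  have dsin : HasDerivAt (fun z : ℂ => Complex.sin ((π : ℂ) * z))
      (Complex.cos ((π : ℂ) * (1 + a)) * π) (1 + a) := by
    have hlin : HasDerivAt (fun z : ℂ => (π : ℂ) * z) (π : ℂ) (1 + a) := by
      simpa using (hasDerivAt_id (1 + a)).const_mul (π : ℂ)
    exact HasDerivAt.comp _ (Complex.hasDerivAt_sin _) hlin
  have hG : HasDerivAt (fun z : ℂ => (π : ℂ) / Complex.sin ((π : ℂ) * z))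
      ((0 * Complex.sin ((π : ℂ) * (1 + a)) - (π : ℂ) * (Complex.cos ((π : ℂ) * (1 + a)) * π)) /
        Complex.sin ((π : ℂ) * (1 + a)) ^ 2) (1 + a) :=
    (hasDerivAt_const _ _).div dsin hsinne
  have hFG : (fun z : ℂ => Complex.Gamma z * Complex.Gamma (1 - z)) =
      fun z : ℂ => (π : ℂ) / Complex.sin ((π : ℂ) * z) :=
    funext Complex.Gamma_mul_Gamma_one_sub
  have E1 : g1 * Q + P * (-g2) =
      (0 * Complex.sin ((π : ℂ) * (1 + a)) - (π : ℂ) * (Complex.cos ((π : ℂ) * (1 + a)) * π)) /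
        Complex.sin ((π : ℂ) * (1 + a)) ^ 2 :=
    hF.unique (hFG ▸ hG)
  have Erefl : P * Q = (π : ℂ) / Complex.sin ((π : ℂ) * (1 + a)) := by
    have := Complex.Gamma_mul_Gamma_one_sub (1 + a)
    rwa [show (1 : ℂ) - (1 + a) = -a by ring] at this
  -- recurrence derivative at -a
  have d3 : HasDerivAt Complex.Gamma ((starRingEnd ℂ) g1) (1 - a) := by
    have := gamma_hasDerivAt_conj d1
    have hcs : (starRingEnd ℂ) (1 + a) = 1 - a := by
      simp [ha_def, map_add, map_mul, Complex.conj_I]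
      ring
    rwa [hcs] at this
  have hL : HasDerivAt (fun z : ℂ => Complex.Gamma (z + 1)) ((starRingEnd ℂ) g1) (-a) := by
    have hlin : HasDerivAt (fun z : ℂ => z + 1) 1 (-a) := (hasDerivAt_id _).add_const 1
    have : -a + 1 = 1 - a := by ring
    have := HasDerivAt.comp (-a) (this ▸ d3) hlin
    simpa [Function.comp_def] using this
  have hev : (fun z : ℂ => Complex.Gamma (z + 1)) =ᶠ[nhds (-a)] fun z => z * Complex.Gamma z := by
    filter_upwards [isOpen_ne.mem_nhds ha'] with z hz
    exact Complex.Gamma_add_one z hz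
  have hR : HasDerivAt (fun z : ℂ => z * Complex.Gamma z) (1 * Q + (-a) * g2) (-a) :=
    (hasDerivAt_id _).mul d2
  have E2 : (starRingEnd ℂ) g1 = 1 * Q + (-a) * g2 :=
    (hL.congr_of_eventuallyEq hev.symm).unique hR
  have EconjP : (starRingEnd ℂ) P = -a * Q := by
    have h1' : (starRingEnd ℂ) P = Complex.Gamma (1 - a) := by
      rw [hP, ← Complex.Gamma_conj]
      congr 1
      simp [ha_def, map_add, map_mul, Complex.conj_I]
      ring
    have h2' : Complex.Gamma (1 - a) = -a * Q := by
      have := Complex.Gamma_add_one (-a) ha'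
      rwa [show -a + 1 = 1 - a by ring] at this
    rw [h1', h2']
  -- key complex identity
  have key : g1 / P - (starRingEnd ℂ) g1 / (starRingEnd ℂ) P =
      -I / (ν : ℂ) + I * (π : ℂ) * (ch : ℂ) / (sh : ℂ) := by
    rw [hsin, hcos] at E1
    rw [hsin] at Erefl
    have hA : (g1 / P - g2 / Q) * (P * Q) = g1 * Q + P * (-g2) := by
      field_simp
      ring
    rw [E1, Erefl] at hA
    have hpi : ((π : ℝ) : ℂ) ≠ 0 := Complex.ofReal_ne_zero.mpr Real.pi_ne_zero
    have hsh' : ((sh : ℝ) : ℂ) ≠ 0 := Complex.ofReal_ne_zero.mpr hshne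
    have hsinne' : -((sh : ℂ) * I) ≠ 0 := by simp [hsh']
    have stepA : g1 / P - g2 / Q =
        ((0 * -((sh:ℂ) * I) - (π:ℂ) * (-(ch:ℂ) * π)) / (-((sh:ℂ) * I)) ^ 2) /
          ((π:ℂ) / -((sh:ℂ) * I)) :=
      eq_div_of_mul_eq (div_ne_zero hpi hsinne') hA
    have hval : ((0 * -((sh:ℂ) * I) - (π:ℂ) * (-(ch:ℂ) * π)) / (-((sh:ℂ) * I)) ^ 2) /
          ((π:ℂ) / -((sh:ℂ) * I)) = I * (π:ℂ) * (ch:ℂ) / (sh:ℂ) := by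
      field_simp
      linear_combination (-(π:ℂ)^2*(ch:ℂ)) * Complex.I_sq
    rw [hval] at stepA
    have hB : (starRingEnd ℂ) g1 / (starRingEnd ℂ) P = g2 / Q - 1 / a := by
      rw [E2, EconjP]
      field_simp
      ring
    rw [hB]
    have h1a : (1 : ℂ) / a = -I / (ν : ℂ) := by
      rw [ha_def]
      rw [div_eq_div_iff (mul_ne_zero Complex.I_ne_zero hν') hν']
      linear_combination (ν:ℂ) * Complex.I_sq
    calc g1 / P - (g2 / Q - 1 / a) = (g1 / P - g2 / Q) + 1 / a := by ring
      _ = -I / (ν : ℂ) + I * (π : ℂ) * (ch : ℂ) / (sh : ℂ) := by rw [stepA, h1a]; ring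
  -- take imaginary parts
  have hconjdiv : (starRingEnd ℂ) g1 / (starRingEnd ℂ) P = (starRingEnd ℂ) (g1 / P) := by
    rw [map_div₀]
  rw [hconjdiv, Complex.sub_conj] at key
  have hrhs : (-I / (ν:ℂ) + I * (π:ℂ) * (ch:ℂ) / (sh:ℂ))
      = ((-1/ν + π * ch / sh : ℝ) : ℂ) * I := by
    push_cast
    field_simp
  rw [hrhs] at key
  have him : (2 * (g1 / P).im : ℝ) = -1/ν + π * ch / sh := by
    exact_mod_cast mul_right_cancel₀ Complex.I_ne_zero key
  have him2 : (I / (2 * (ν:ℂ))).im = 1 / (2 * ν) := by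
    rw [show (2 * (ν:ℂ)) = ((2 * ν : ℝ) : ℂ) by push_cast; ring, div_eq_mul_inv,
      ← Complex.ofReal_inv]
    simp [mul_comm]
  rw [Complex.add_im, him2]
  have h2ν : (2 : ℝ) * ν ≠ 0 := by simpa using hν
  field_simp at him ⊢
  linarith
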